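/- Let n ≥ 1, L > 0, and let f : ℝⁿ → ℝ belong to F_{−L,L} (in particular, any L-smooth function). Assume f⋆ = inf f is finite and that f satisfies the PL inequality with constant μ_p, with 0 < μ_p ≤ L, on the sublevel set X = {x : f(x) ≤ f(x¹)} of a point x¹ ∈ ℝⁿ. If x² = x¹ − (1/L)∇f(x¹), then f(x²) − f⋆ ≤ ((2L − 2μ_p)/(2L + μ_p)) · (f(x¹) − f⋆). -/

import Mathlib

open Set InnerProductSpace
open scoped RealInnerProductSpace

section Aux
variable {E : Type*} [NormedAddCommGroup E] [InnerProductSpace ℝ E] [CompleteSpace E]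

lemma my_hasGradientAt_sub {f g : E → ℝ} {fg gg : E} {x : E}
    (hf : HasGradientAt f fg x) (hg : HasGradientAt g gg x) :
    HasGradientAt (fun y => f y - g y) (fg - gg) x := by
  rw [hasGradientAt_iff_hasFDerivAt] at *
  rw [map_sub]
  exact hf.sub hg

lemma my_hasGradientAt_quad (c : ℝ) (x : E) :
    HasGradientAt (fun y : E => c / 2 * ‖y‖ ^ 2) ((c : ℝ) • x) x := by
  rw [hasGradientAt_iff_hasFDerivAt]
  have h1 := ((hasFDerivAt_id x).inner ℝ (hasFDerivAt_id x)).const_mul (c / 2)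
  have hfun : (fun y : E => c / 2 * ‖y‖ ^ 2) = fun y : E => c / 2 * ⟪y, y⟫_ℝ := by
    funext y; rw [real_inner_self_eq_norm_sq]
  rw [hfun]
  refine h1.congr_fderiv ?_
  ext v
  simp [fderivInnerCLM_apply, real_inner_smul_left, real_inner_comm]
  ring

lemma my_convex_grad_ineq {g : E → ℝ} (hconv : ConvexOn ℝ univ g)
    {gx : E} (x y : E) (hg : HasGradientAt g gx x) :
    g x + ⟪gx, y - x⟫_ℝ ≤ g y := by
  set φ : ℝ → ℝ := fun t => g (x + t • (y - x)) with hφ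
  have hφconv : ConvexOn ℝ univ φ := by
    have h := hconv.comp_affineMap (AffineMap.lineMap x y)
    have he : φ = (g ∘ (AffineMap.lineMap x y)) := by
      funext t
      simp only [hφ, Function.comp_apply, AffineMap.lineMap_apply_module]
      congr 1
      module
    rw [he]
    simpa using h
  have hd : HasDerivAt φ ⟪gx, y - x⟫_ℝ 0 := by
    have hc : HasDerivAt (fun t : ℝ => x + t • (y - x)) (y - x) 0 := by
      simpa using ((hasDerivAt_id (0 : ℝ)).smul_const (y - x)).const_add x
    have hg' : HasFDerivAt g (toDual ℝ E gx) ((fun t : ℝ => x + t • (y - x)) 0) := by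
      simpa using hg.hasFDerivAt
    have := hg'.comp_hasDerivAt 0 hc
    rw [hφ]
    simpa [Function.comp_def] using this
  have hs := hφconv.le_slope_of_hasDerivAt (mem_univ (0 : ℝ)) (mem_univ 1) one_pos hd
  have hφ0 : φ 0 = g x := by simp [hφ]
  have hφ1 : φ 1 = g y := by
    have : x + (1 : ℝ) • (y - x) = y := by module
    simp [hφ, this]
  rw [slope_def_field, hφ0, hφ1] at hs
  norm_num at hs
  linarith

end Aux

set_option maxHeartbeats 2000000 in
theorem stmt_3 (n : ℕ) (hn : 1 ≤ n)
    (f : EuclideanSpace ℝ (Fin n) → ℝ)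
    (f' : EuclideanSpace ℝ (Fin n) → EuclideanSpace ℝ (Fin n))
    (L : ℝ) (hL : 0 < L)
    (hgrad : ∀ x, HasGradientAt f (f' x) x)
    (hupper : ConvexOn ℝ univ (fun x => L / 2 * ‖x‖ ^ 2 - f x))
    (hlower : ConvexOn ℝ univ (fun x => f x - (-L) / 2 * ‖x‖ ^ 2))
    (fstar : ℝ) (hfstar : IsGLB (range f) fstar)
    (μp : ℝ) (hμp : 0 < μp) (hμpL : μp ≤ L)
    (x1 : EuclideanSpace ℝ (Fin n))
    (hPL : ∀ x, f x ≤ f x1 → f x - fstar ≤ 1 / (2 * μp) * ‖f' x‖ ^ 2)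
    (x2 : EuclideanSpace ℝ (Fin n)) (hx2 : x2 = x1 - (1 / L) • f' x1) :
    f x2 - fstar ≤ (2 * L - 2 * μp) / (2 * L + μp) * (f x1 - fstar) := by
  have hLne : L ≠ 0 := ne_of_gt hL
  set g1 : EuclideanSpace ℝ (Fin n) := f' x1 with hg1
  set g2 : EuclideanSpace ℝ (Fin n) := f' x2 with hg2
  set z : EuclideanSpace ℝ (Fin n) := x1 - (1 / (2 * L)) • ((2 : ℝ) • g1 - g2) with hz
  -- gradient inequality from hupper at (x1, z)
  have hGu : HasGradientAt (fun y => L / 2 * ‖y‖ ^ 2 - f y) (L • x1 - g1) x1 :=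
    my_hasGradientAt_sub (my_hasGradientAt_quad L x1) (hgrad x1)
  have hA := my_convex_grad_ineq hupper x1 z hGu
  -- gradient inequality from hlower at (x2, z)
  have hGl : HasGradientAt (fun y => f y - (-L) / 2 * ‖y‖ ^ 2) (g2 - (-L) • x2) x2 := by
    have := my_hasGradientAt_sub (hgrad x2) (my_hasGradientAt_quad (-L) x2)
    simpa using this
  have hB := my_convex_grad_ineq hlower x2 z hGl
  -- the exact algebraic identity: sum of the two residuals
  have hkey :
      ((L / 2 * ‖z‖ ^ 2 - f z) - ((L / 2 * ‖x1‖ ^ 2 - f x1) + ⟪L • x1 - g1, z - x1⟫_ℝ))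
      + ((f z - (-L) / 2 * ‖z‖ ^ 2) - ((f x2 - (-L) / 2 * ‖x2‖ ^ 2) + ⟪g2 - (-L) • x2, z - x2⟫_ℝ))
      = (f x1 - f x2) - 1 / (4 * L) * (2 * ‖g1‖ ^ 2 + ‖g2‖ ^ 2) := by
    simp only [hz, hx2, ← real_inner_self_eq_norm_sq, inner_sub_left, inner_sub_right,
      real_inner_smul_left, real_inner_smul_right, real_inner_comm g2 g1,
      real_inner_comm g1 x1, real_inner_comm g2 x1]
    field_simp
    ring
  have hC : 2 * ‖g1‖ ^ 2 + ‖g2‖ ^ 2 ≤ 4 * L * (f x1 - f x2) := by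
    have h4L : 0 < 4 * L := by linarith
    have hsum : 0 ≤ (f x1 - f x2) - 1 / (4 * L) * (2 * ‖g1‖ ^ 2 + ‖g2‖ ^ 2) := by
      rw [← hkey]; linarith
    rw [← sub_nonneg]
    have := mul_le_mul_of_nonneg_left (sub_nonneg.mp (by linarith : (0:ℝ) ≤ (f x1 - f x2) - 1 / (4 * L) * (2 * ‖g1‖ ^ 2 + ‖g2‖ ^ 2)) ) (le_of_lt h4L)
    calc (0:ℝ) ≤ 4 * L * ((f x1 - f x2) - 1 / (4 * L) * (2 * ‖g1‖ ^ 2 + ‖g2‖ ^ 2)) := by positivity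
    _ = 4 * L * (f x1 - f x2) - (2 * ‖g1‖ ^ 2 + ‖g2‖ ^ 2) := by field_simp
  have hff : f x2 ≤ f x1 := by nlinarith [sq_nonneg ‖g1‖, sq_nonneg ‖g2‖]
  have hPL1 := hPL x1 le_rfl
  have hPL2 := hPL x2 hff
  have hμ2 : (0:ℝ) < 2 * μp := by linarith
  have h1 : 2 * μp * (f x1 - fstar) ≤ ‖g1‖ ^ 2 := by
    have h := mul_le_mul_of_nonneg_left hPL1 (le_of_lt hμ2)
    calc 2 * μp * (f x1 - fstar) ≤ 2 * μp * (1 / (2 * μp) * ‖g1‖ ^ 2) := h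
    _ = ‖g1‖ ^ 2 := by field_simp
  have h2 : 2 * μp * (f x2 - fstar) ≤ ‖g2‖ ^ 2 := by
    have h := mul_le_mul_of_nonneg_left hPL2 (le_of_lt hμ2)
    calc 2 * μp * (f x2 - fstar) ≤ 2 * μp * (1 / (2 * μp) * ‖g2‖ ^ 2) := h
    _ = ‖g2‖ ^ 2 := by field_simp
  rw [div_mul_eq_mul_div, le_div_iff₀ (by linarith : (0:ℝ) < 2 * L + μp)]
  nlinarith [hC, h1, h2]
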